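/- Let a > 0 and let N_T(t) = #{(j,k) ∈ ℤ² : π²(j² + k²)/a² ≤ t}. Then for every t ≥ 0, #{(j,k) ∈ ℤ² : 0 ≤ j < k, π²(j² + k²)/a² ≤ t} = (1/8)N_T(t) + (1/2)(⌊a√t/π⌋ + 1/2) − (1/2)(⌊a√t/(√2 π)⌋ + 1/2) − 1/8. -/

import Mathlib

open Real

private lemma card_refl_aux {D : Finset (ℤ × ℤ)} {P Q : ℤ × ℤ → Prop}
    [DecidablePred P] [DecidablePred Q] (f : ℤ × ℤ → ℤ × ℤ)
    (hf : ∀ p, f (f p) = p)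
    (h1 : ∀ p ∈ D.filter P, f p ∈ D.filter Q)
    (h2 : ∀ p ∈ D.filter Q, f p ∈ D.filter P) :
    (D.filter P).card = (D.filter Q).card :=
  Finset.card_nbij' f f h1 h2 (fun p _ => hf p) (fun p _ => hf p)

private lemma split3 {α : Type*} (s : Finset α) (f : α → ℤ) :
    s.card = (s.filter (fun a => f a < 0)).card + (s.filter (fun a => f a = 0)).card
      + (s.filter (fun a => 0 < f a)).card := by
  classical
  have h1 := Finset.card_filter_add_card_filter_not (s := s) (p := fun a => f a < 0)
  have h2 := Finset.card_filter_add_card_filter_not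
      (s := s.filter (fun a => ¬ f a < 0)) (p := fun a => f a = 0)
  rw [Finset.filter_filter, Finset.filter_filter] at h2
  have e1 : s.filter (fun a => ¬ f a < 0 ∧ f a = 0) = s.filter (fun a => f a = 0) :=
    Finset.filter_congr (fun a _ => by omega)
  have e2 : s.filter (fun a => ¬ f a < 0 ∧ ¬ f a = 0) = s.filter (fun a => 0 < f a) :=
    Finset.filter_congr (fun a _ => by omega)
  rw [e1, e2] at h2
  omega

private lemma core (B : ℝ) (hB : 0 ≤ B) :
    8 * (({p : ℤ × ℤ | 0 ≤ p.1 ∧ p.1 < p.2 ∧ (p.1:ℝ)^2 + (p.2:ℝ)^2 ≤ B}.ncard) : ℤ)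
      = ({p : ℤ × ℤ | (p.1:ℝ)^2 + (p.2:ℝ)^2 ≤ B}.ncard : ℤ)
        + 4 * ⌊Real.sqrt B⌋ - 4 * ⌊Real.sqrt (B/2)⌋ - 1 := by
  classical
  set m : ℤ := ⌊Real.sqrt B⌋ with hm
  set q : ℤ := ⌊Real.sqrt (B/2)⌋ with hq
  have hm0 : 0 ≤ m := Int.floor_nonneg.mpr (Real.sqrt_nonneg _)
  have hq0 : 0 ≤ q := Int.floor_nonneg.mpr (Real.sqrt_nonneg _)
  have hsq : ∀ j : ℤ, ((j:ℝ)^2 ≤ B ↔ |j| ≤ m) := by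
    intro j
    rw [hm, Int.le_floor, show ((|j|:ℤ):ℝ) = |(j:ℝ)| by push_cast; ring,
      Real.le_sqrt (abs_nonneg _) hB, sq_abs]
  have hdq : ∀ j : ℤ, ((j:ℝ)^2 + (j:ℝ)^2 ≤ B ↔ |j| ≤ q) := by
    intro j
    rw [hq, Int.le_floor, show ((|j|:ℤ):ℝ) = |(j:ℝ)| by push_cast; ring,
      Real.le_sqrt (abs_nonneg _) (by linarith), sq_abs]
    constructor <;> intro h <;> linarith
  have hex : ∃ D : Finset (ℤ × ℤ), ∀ p : ℤ × ℤ, p ∈ D ↔ (p.1:ℝ)^2 + (p.2:ℝ)^2 ≤ B := by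
    classical
    refine ⟨(Finset.Icc ((-m, -m) : ℤ × ℤ) (m, m)).filter
      (fun p => (p.1:ℝ)^2 + (p.2:ℝ)^2 ≤ B), ?_⟩
    intro p
    simp only [Finset.mem_filter, Finset.mem_Icc, Prod.le_def, and_iff_right_iff_imp]
    intro h
    have h1 : (p.1:ℝ)^2 ≤ B := by nlinarith [sq_nonneg (p.2:ℝ)]
    have h2 : (p.2:ℝ)^2 ≤ B := by nlinarith [sq_nonneg (p.1:ℝ)]
    obtain ⟨a1, a2⟩ := abs_le.mp ((hsq p.1).mp h1)
    obtain ⟨b1, b2⟩ := abs_le.mp ((hsq p.2).mp h2)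
    exact ⟨⟨a1, b1⟩, ⟨a2, b2⟩⟩
  obtain ⟨D, hmemD⟩ := hex
  have hsetD : {p : ℤ × ℤ | (p.1:ℝ)^2 + (p.2:ℝ)^2 ≤ B} = ↑D := by
    ext p; simp [hmemD p]
  have hsetM : {p : ℤ × ℤ | 0 ≤ p.1 ∧ p.1 < p.2 ∧ (p.1:ℝ)^2 + (p.2:ℝ)^2 ≤ B}
      = ↑(D.filter (fun p => 0 ≤ p.1 ∧ p.1 < p.2)) := by
    ext p
    simp only [Set.mem_setOf_eq, Finset.coe_filter, Set.mem_setOf_eq, hmemD p]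
    tauto
  rw [hsetD, hsetM, Set.ncard_coe_finset, Set.ncard_coe_finset]
  -- invariances of D
  have hDneg2 : ∀ p : ℤ × ℤ, p ∈ D → ((p.1, -p.2) : ℤ × ℤ) ∈ D := by
    intro p hp
    rw [hmemD] at hp ⊢
    push_cast
    simpa [neg_sq] using hp
  have hDneg1 : ∀ p : ℤ × ℤ, p ∈ D → ((-p.1, p.2) : ℤ × ℤ) ∈ D := by
    intro p hp
    rw [hmemD] at hp ⊢
    push_cast
    simpa [neg_sq] using hp
  have hDswap : ∀ p : ℤ × ℤ, p ∈ D → ((p.2, p.1) : ℤ × ℤ) ∈ D := by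
    intro p hp
    rw [hmemD] at hp ⊢
    linarith [hp]
  -- segment counts
  have hA0card : (D.filter (fun p => p.2 = 0)).card = (2*m+1).toNat := by
    have himg : (D.filter (fun p => p.2 = 0))
        = (Finset.Icc (-m) m).image (fun j => ((j, 0) : ℤ × ℤ)) := by
      ext ⟨x, y⟩
      simp only [Finset.mem_filter, Finset.mem_image, Finset.mem_Icc, Prod.mk.injEq]
      constructor
      · rintro ⟨hx, rfl⟩
        have hx2 : (x:ℝ)^2 ≤ B := by simpa using (hmemD (x,0)).mp hx
        obtain ⟨u1, u2⟩ := abs_le.mp ((hsq x).mp hx2)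
        exact ⟨x, ⟨u1, u2⟩, rfl, rfl⟩
      · rintro ⟨j, hj, rfl, rfl⟩
        refine ⟨(hmemD (j,0)).mpr ?_, rfl⟩
        have : (j:ℝ)^2 ≤ B := (hsq j).mpr (abs_le.mpr ⟨hj.1, hj.2⟩)
        simpa using this
    rw [himg, Finset.card_image_of_injective _ (fun a b h => by simpa using h), Int.card_Icc]
    congr 1; ring
  have hP0card : (D.filter (fun p => 0 < p.2 ∧ p.1 = 0)).card = m.toNat := by
    have himg : (D.filter (fun p => 0 < p.2 ∧ p.1 = 0))
        = (Finset.Icc 1 m).image (fun k => ((0, k) : ℤ × ℤ)) := by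
      ext ⟨x, y⟩
      simp only [Finset.mem_filter, Finset.mem_image, Finset.mem_Icc, Prod.mk.injEq]
      constructor
      · rintro ⟨hx, hy, rfl⟩
        have hy2 : (y:ℝ)^2 ≤ B := by simpa using (hmemD (0,y)).mp hx
        obtain ⟨u1, u2⟩ := abs_le.mp ((hsq y).mp hy2)
        exact ⟨y, ⟨hy, u2⟩, rfl, rfl⟩
      · rintro ⟨k, hk, rfl, rfl⟩
        refine ⟨(hmemD (0,k)).mpr ?_, by omega, rfl⟩
        have : (k:ℝ)^2 ≤ B := (hsq k).mpr (abs_le.mpr ⟨by omega, hk.2⟩)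
        simpa using this
    rw [himg, Finset.card_image_of_injective _ (fun a b h => by simpa using h), Int.card_Icc]
    congr 1; ring
  have hQDcard : (D.filter (fun p => 0 < p.1 ∧ p.1 = p.2)).card = q.toNat := by
    have himg : (D.filter (fun p => 0 < p.1 ∧ p.1 = p.2))
        = (Finset.Icc 1 q).image (fun k => ((k, k) : ℤ × ℤ)) := by
      ext ⟨x, y⟩
      simp only [Finset.mem_filter, Finset.mem_image, Finset.mem_Icc, Prod.mk.injEq]
      constructor
      · rintro ⟨hx, hy, rfl⟩
        have hx2 : (x:ℝ)^2 + (x:ℝ)^2 ≤ B := by simpa using (hmemD (x,x)).mp hx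
        obtain ⟨u1, u2⟩ := abs_le.mp ((hdq x).mp hx2)
        exact ⟨x, ⟨hy, u2⟩, rfl, rfl⟩
      · rintro ⟨k, hk, rfl, rfl⟩
        refine ⟨(hmemD (k,k)).mpr ?_, by omega, rfl⟩
        exact (hdq k).mpr (abs_le.mpr ⟨by omega, hk.2⟩)
    rw [himg, Finset.card_image_of_injective _ (fun a b h => by simpa using h), Int.card_Icc]
    congr 1; ring
  -- reflections
  have e1 : (D.filter (fun p => p.2 < 0)).card = (D.filter (fun p => 0 < p.2)).card := by
    apply card_refl_aux (fun p => (p.1, -p.2)) (fun p => by simp)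
    · intro p hp
      rw [Finset.mem_filter] at hp ⊢
      exact ⟨hDneg2 p hp.1, by simpa using by omega⟩
    · intro p hp
      rw [Finset.mem_filter] at hp ⊢
      refine ⟨hDneg2 p hp.1, ?_⟩
      have := hp.2; simp only; omega
  have e2 : (D.filter (fun p => 0 < p.2 ∧ p.1 < 0)).card
      = (D.filter (fun p => 0 < p.2 ∧ 0 < p.1)).card := by
    apply card_refl_aux (fun p => (-p.1, p.2)) (fun p => by simp)
    · intro p hp
      rw [Finset.mem_filter] at hp ⊢
      refine ⟨hDneg1 p hp.1, ?_⟩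
      have := hp.2; simp only; omega
    · intro p hp
      rw [Finset.mem_filter] at hp ⊢
      refine ⟨hDneg1 p hp.1, ?_⟩
      have := hp.2; simp only; omega
  have e3 : (D.filter (fun p => 0 < p.2 ∧ p.2 < p.1)).card
      = (D.filter (fun p => 0 < p.1 ∧ p.1 < p.2)).card := by
    apply card_refl_aux (fun p => (p.2, p.1)) (fun p => by simp)
    · intro p hp
      rw [Finset.mem_filter] at hp ⊢
      refine ⟨hDswap p hp.1, ?_⟩
      have := hp.2; simp only; omega
    · intro p hp
      rw [Finset.mem_filter] at hp ⊢
      refine ⟨hDswap p hp.1, ?_⟩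
      have := hp.2; simp only; omega
  -- splits
  have s1 := split3 D (fun p => p.2)
  have s2 := split3 (D.filter (fun p => 0 < p.2)) (fun p => p.1)
  rw [Finset.filter_filter, Finset.filter_filter, Finset.filter_filter] at s2
  have s3 := split3 (D.filter (fun p => 0 < p.2 ∧ 0 < p.1)) (fun p => p.2 - p.1)
  rw [Finset.filter_filter, Finset.filter_filter, Finset.filter_filter] at s3
  have s4 := split3 (D.filter (fun p => 0 ≤ p.1 ∧ p.1 < p.2)) (fun p => p.1)
  rw [Finset.filter_filter, Finset.filter_filter, Finset.filter_filter] at s4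
  -- normalize predicates in s3
  have n31 : D.filter (fun p => (0 < p.2 ∧ 0 < p.1) ∧ p.2 - p.1 < 0)
      = D.filter (fun p => 0 < p.2 ∧ p.2 < p.1) :=
    Finset.filter_congr (fun p _ => by omega)
  have n32 : D.filter (fun p => (0 < p.2 ∧ 0 < p.1) ∧ p.2 - p.1 = 0)
      = D.filter (fun p => 0 < p.1 ∧ p.1 = p.2) :=
    Finset.filter_congr (fun p _ => by omega)
  have n33 : D.filter (fun p => (0 < p.2 ∧ 0 < p.1) ∧ 0 < p.2 - p.1)
      = D.filter (fun p => 0 < p.1 ∧ p.1 < p.2) :=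
    Finset.filter_congr (fun p _ => by omega)
  rw [n31, n32, n33] at s3
  -- normalize predicates in s4
  have n41 : D.filter (fun p => (0 ≤ p.1 ∧ p.1 < p.2) ∧ p.1 < 0)
      = D.filter (fun _ => False) := by
    refine Finset.filter_congr (fun p _ => ?_)
    simp only [iff_false]
    omega
  have n42 : D.filter (fun p => (0 ≤ p.1 ∧ p.1 < p.2) ∧ p.1 = 0)
      = D.filter (fun p => 0 < p.2 ∧ p.1 = 0) :=
    Finset.filter_congr (fun p _ => by omega)
  have n43 : D.filter (fun p => (0 ≤ p.1 ∧ p.1 < p.2) ∧ 0 < p.1)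
      = D.filter (fun p => 0 < p.1 ∧ p.1 < p.2) :=
    Finset.filter_congr (fun p _ => by omega)
  rw [n41, n42, n43, Finset.filter_false, Finset.card_empty] at s4
  omega

theorem right_isosceles_triangle_MN_count (a : ℝ) (ha : 0 < a) (t : ℝ) (ht : 0 ≤ t) :
    ({p : ℤ × ℤ | 0 ≤ p.1 ∧ p.1 < p.2 ∧
        π ^ 2 * ((p.1 : ℝ) ^ 2 + (p.2 : ℝ) ^ 2) / a ^ 2 ≤ t}.ncard : ℝ) =
      (1 / 8) * ({p : ℤ × ℤ |
          π ^ 2 * ((p.1 : ℝ) ^ 2 + (p.2 : ℝ) ^ 2) / a ^ 2 ≤ t}.ncard : ℝ)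
        + (1 / 2) * ((⌊a * Real.sqrt t / π⌋ : ℝ) + 1 / 2)
        - (1 / 2) * ((⌊a * Real.sqrt t / (Real.sqrt 2 * π)⌋ : ℝ) + 1 / 2) - 1 / 8 := by
  have hpi := Real.pi_pos
  set B : ℝ := t * a ^ 2 / π ^ 2 with hBdef
  have hB : 0 ≤ B := by positivity
  have hcond : ∀ S : ℝ, (π ^ 2 * S / a ^ 2 ≤ t ↔ S ≤ B) := by
    intro S
    rw [div_le_iff₀ (by positivity), hBdef, le_div_iff₀ (by positivity)]
    constructor <;> intro h <;> linarith
  have hs1 : {p : ℤ × ℤ | 0 ≤ p.1 ∧ p.1 < p.2 ∧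
      π ^ 2 * ((p.1 : ℝ) ^ 2 + (p.2 : ℝ) ^ 2) / a ^ 2 ≤ t}
      = {p : ℤ × ℤ | 0 ≤ p.1 ∧ p.1 < p.2 ∧ (p.1:ℝ)^2 + (p.2:ℝ)^2 ≤ B} := by
    ext p; simp only [Set.mem_setOf_eq, hcond]
  have hs2 : {p : ℤ × ℤ | π ^ 2 * ((p.1 : ℝ) ^ 2 + (p.2 : ℝ) ^ 2) / a ^ 2 ≤ t}
      = {p : ℤ × ℤ | (p.1:ℝ)^2 + (p.2:ℝ)^2 ≤ B} := by
    ext p; simp only [Set.mem_setOf_eq, hcond]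
  have hf1 : a * Real.sqrt t / π = Real.sqrt B := by
    rw [hBdef, Real.sqrt_div (by positivity), Real.sqrt_mul ht, Real.sqrt_sq ha.le,
      Real.sqrt_sq hpi.le]
    ring
  have hf2 : a * Real.sqrt t / (Real.sqrt 2 * π) = Real.sqrt (B / 2) := by
    rw [Real.sqrt_div hB, ← hf1, div_div, mul_comm π (Real.sqrt 2)]
  rw [hs1, hs2, hf1, hf2]
  have hcore := core B hB
  have hcoreR : 8 * (({p : ℤ × ℤ | 0 ≤ p.1 ∧ p.1 < p.2 ∧ (p.1:ℝ)^2 + (p.2:ℝ)^2 ≤ B}.ncard) : ℝ)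
      = ({p : ℤ × ℤ | (p.1:ℝ)^2 + (p.2:ℝ)^2 ≤ B}.ncard : ℝ)
        + 4 * ((⌊Real.sqrt B⌋ : ℤ) : ℝ) - 4 * ((⌊Real.sqrt (B/2)⌋ : ℤ) : ℝ) - 1 := by
    exact_mod_cast hcore
  linarith
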